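/- Let p be an odd prime and D ∈ ℤ/pℤ a non-square. Then for every element m of the parameter group P_{ℤ/pℤ} = (ℤ/pℤ) ∪ {α} (including m = α), the (p+2)-nd ⊙-power of m equals m, i.e. m^{⊙(p+2)} = m. -/

import Mathlib

/- The product `⊙` on the parameter set `P_K = K ∪ {α}`, realized as `Option K`
(`none` plays the role of `α`). -/
open Classical in
noncomputable def paraMul {K : Type*} [Field K] (D : K) : Option K → Option K → Option K
  | some a, some b => if a + b = 0 then none else some ((D + a * b) / (a + b))
  | none, x => x
  | some a, none => some a

/-- `n`-th power with respect to `⊙` (identity `α = none`). -/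
noncomputable def paraPow {K : Type*} [Field K] (D : K) (m : Option K) : ℕ → Option K
  | 0 => none
  | n + 1 => paraMul D m (paraPow D m n)

open Polynomial in
/-- For an odd prime `p` and a non-square `D ∈ ℤ/pℤ`, every element `m`
of the parameter group `P_{ℤ/pℤ}` (including `m = α`) satisfies `m^{⊙(p+2)} = m`. -/
theorem paraPow_p_add_two (p : ℕ) [Fact p.Prime] (hp2 : p ≠ 2) (D : ZMod p)
    (hD : ∀ c : ZMod p, c ^ 2 ≠ D) :
    ∀ m : Option (ZMod p), paraPow D m (p + 2) = m := by
  have hp := Fact.out (p := p.Prime)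
  have hodd : p % 2 = 1 := Nat.odd_iff.mp (hp.odd_of_ne_two hp2)
  have hplt : 2 < p := lt_of_le_of_ne hp.two_le (Ne.symm hp2)
  have hD0 : D ≠ 0 := fun h => hD 0 (by simp [h])
  -- Euler's criterion: D ^ (p / 2) = -1
  have heuler : D ^ (p / 2) = -1 := by
    have hsq : (D ^ (p / 2)) * (D ^ (p / 2)) = 1 := by
      rw [← pow_add]
      have h2 : p / 2 + p / 2 = p - 1 := by omega
      rw [h2, ZMod.pow_card_sub_one_eq_one hD0]
    rcases mul_self_eq_one_iff.mp hsq with h | h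
    · exact absurd ((ZMod.euler_criterion p hD0).mpr h)
        (fun ⟨r, hr⟩ => hD r (by rw [sq]; exact hr.symm))
    · exact h
  -- the quadratic X^2 - D is irreducible
  set f : (ZMod p)[X] := X ^ 2 - C D with hf
  have hdeg : f.natDegree = 2 := by rw [hf]; exact natDegree_X_pow_sub_C
  have hirr : Irreducible f := by
    rw [irreducible_iff_roots_eq_zero_of_degree_le_three (by omega) (by omega)]
    rw [Multiset.eq_zero_iff_forall_notMem]
    intro c hc
    rw [mem_roots (by rw [hf]; exact X_pow_sub_C_ne_zero (by norm_num) D), IsRoot.def,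
      hf] at hc
    simp only [eval_sub, eval_pow, eval_X, eval_C, sub_eq_zero] at hc
    exact hD c hc
  have : Fact (Irreducible f) := ⟨hirr⟩
  let K2 := AdjoinRoot f
  let i : ZMod p →+* K2 := algebraMap (ZMod p) K2
  have hi : Function.Injective i := i.injective
  have : CharP K2 p := charP_of_injective_ringHom hi p
  let ω : K2 := AdjoinRoot.root f
  have hωsq : ω ^ 2 = i D := by
    have h0 := AdjoinRoot.eval₂_root f
    rw [hf] at h0
    rw [eval₂_sub, eval₂_pow, eval₂_X, eval₂_C, sub_eq_zero] at h0
    show AdjoinRoot.root f ^ 2 = algebraMap (ZMod p) K2 D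
    rw [AdjoinRoot.algebraMap_eq]
    exact h0
  have hω0 : ω ≠ 0 := fun h => hD0 (hi (by rw [← hωsq, h]; simp))
  -- key nonvanishing: i a ± ω ≠ 0
  have hsub : ∀ a : ZMod p, i a - ω ≠ 0 := by
    intro a h
    rw [sub_eq_zero] at h
    exact hD a (hi (by rw [map_pow, h, hωsq]))
  have hadd : ∀ a : ZMod p, i a + ω ≠ 0 := by
    intro a h
    apply hD (-a)
    apply hi
    rw [map_pow, map_neg]
    linear_combination (i a - ω) * h + hωsq
  have h2ω : (2 : K2) * ω ≠ 0 := by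
    refine mul_ne_zero ?_ hω0
    have h2p : (2 : ZMod p) ≠ 0 := by
      intro h
      have h' : ((2 : ℕ) : ZMod p) = 0 := by exact_mod_cast h
      rw [ZMod.natCast_eq_zero_iff] at h'
      have := Nat.le_of_dvd (by norm_num) h'
      omega
    intro h
    apply h2p
    apply hi
    rw [map_ofNat, map_zero, h]
  -- Frobenius: ω ^ p = -ω
  have hωp : ω ^ p = -ω := by
    have hsplit : ω ^ p = (ω ^ 2) ^ (p / 2) * ω := by
      rw [← pow_mul, ← pow_succ]
      congr 1
      omega
    rw [hsplit, hωsq, ← map_pow, heuler]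
    simp
    ring
  -- the embedding ψ of the parameter group
  set ψ : Option (ZMod p) → K2 := fun m =>
    match m with
    | none => 1
    | some a => (i a + ω) / (i a - ω) with hψ
  have hψsome : ∀ a : ZMod p, ψ (some a) = (i a + ω) / (i a - ω) := fun a => rfl
  have hψnone : ψ none = 1 := rfl
  have hψmul : ∀ m n : Option (ZMod p), ψ (paraMul D m n) = ψ m * ψ n := by
    rintro (_ | a) (_ | b)
    · simp only [paraMul]; rw [hψnone]; ring
    · simp only [paraMul]; rw [hψnone]; ring
    · simp only [paraMul]; rw [hψnone]; ring
    · simp only [paraMul]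
      rw [hψsome, hψsome]
      by_cases hab : a + b = 0
      · rw [if_pos hab, hψnone]
        have hib : i b = - i a := by
          rw [← map_neg]; congr 1; linear_combination hab
        rw [eq_comm, div_mul_div_comm,
          div_eq_one_iff_eq (mul_ne_zero (hsub a) (hsub b)), hib]
        ring
      · rw [if_neg hab, hψsome]
        have hc : i ((D + a * b) / (a + b)) * (i a + i b) = ω ^ 2 + i a * i b := by
          rw [← map_add, ← map_mul, div_mul_cancel₀ _ hab, map_add, map_mul, hωsq]
        rw [div_mul_div_comm,
          div_eq_div_iff (hsub _) (mul_ne_zero (hsub a) (hsub b))]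
        linear_combination (-(2 : K2) * ω) * hc
  have hψpow : ∀ (m : Option (ZMod p)) (n : ℕ), ψ (paraPow D m n) = ψ m ^ n := by
    intro m n
    induction n with
    | zero => simp only [paraPow]; rw [hψnone, pow_zero]
    | succ k ih =>
      simp only [paraPow]
      rw [hψmul, ih, pow_succ, mul_comm]
  have hψone : ∀ m : Option (ZMod p), ψ m ^ (p + 1) = 1 := by
    rintro (_ | a)
    · rw [hψnone]; exact one_pow _
    · rw [hψsome]
      have hfrob : ∀ x : ZMod p, ∀ s : K2, (i x + s) ^ p = i x + s ^ p := by
        intro x s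
        rw [add_pow_char, ← map_pow, ZMod.pow_card]
      have e1 : (i a + ω) ^ (p + 1) = (i a - ω) * (i a + ω) := by
        rw [pow_succ, hfrob, hωp, ← sub_eq_add_neg]
      have e2 : (i a - ω) ^ (p + 1) = (i a + ω) * (i a - ω) := by
        have hrw : i a - ω = i a + (-ω) := by ring
        rw [pow_succ, hrw, hfrob, Odd.neg_pow (Nat.odd_iff.mpr hodd), hωp, neg_neg,
          ← sub_eq_add_neg]
      rw [div_pow, e1, e2, mul_comm (i a + ω) (i a - ω)]
      exact div_self (mul_ne_zero (hsub a) (hadd a))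
  have hψinj : Function.Injective ψ := by
    rintro (_ | a) (_ | b) h
    · rfl
    · exfalso
      rw [hψnone, hψsome, eq_comm, div_eq_one_iff_eq (hsub b)] at h
      exact h2ω (by linear_combination h)
    · exfalso
      rw [hψnone, hψsome, div_eq_one_iff_eq (hsub a)] at h
      exact h2ω (by linear_combination h)
    · rw [hψsome, hψsome, div_eq_div_iff (hsub a) (hsub b)] at h
      have h2 : (2 : K2) * ω * (i b - i a) = 0 := by linear_combination h
      have h3 : i b - i a = 0 := by
        rcases mul_eq_zero.mp h2 with h' | h'
        · exact absurd h' h2ω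
        · exact h'
      have hab : a = b := by
        apply hi
        rw [eq_comm, ← sub_eq_zero]
        exact h3
      rw [hab]
  intro m
  apply hψinj
  rw [hψpow]
  have hsplit : p + 2 = (p + 1) + 1 := by ring
  rw [hsplit, pow_succ, hψone, one_mul]
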